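/- arXiv:2002.07937 — 3 statements merged into one kernel-verified Lean document; each statement's English description precedes it below -/
import Mathlib

section
/- (Maximum principle on an unbounded domain) Let Ω = ℝᵈ × [0,T] and let a satisfy a_0 ≤ a(x,t) ≤ ε(|x|)|x|² + C with ε(r) → 0 as r → ∞ and a_0 > 0. If v ∈ C^{2,1}(Ω) is bounded above, satisfies ∂v/∂t − a Δv ≤ 0 in Ω, then v(x,t) ≤ sup_x v(x,0) for all (x,t) ∈ Ω. -/
open Filter Set


noncomputable def pd {d : ℕ} (f : EuclideanSpace ℝ (Fin d) → ℝ) (i : Fin d)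
    (x : EuclideanSpace ℝ (Fin d)) : ℝ :=
  fderiv ℝ f x (EuclideanSpace.single i 1)

noncomputable def lap {d : ℕ} (f : EuclideanSpace ℝ (Fin d) → ℝ)
    (x : EuclideanSpace ℝ (Fin d)) : ℝ :=
  ∑ i : Fin d, pd (fun y => pd f i y) i x

noncomputable def gradSq {d : ℕ} (f : EuclideanSpace ℝ (Fin d) → ℝ)
    (x : EuclideanSpace ℝ (Fin d)) : ℝ :=
  ∑ i : Fin d, (pd f i x) ^ 2

noncomputable def dt {d : ℕ} (f : EuclideanSpace ℝ (Fin d) → ℝ → ℝ)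
    (x : EuclideanSpace ℝ (Fin d)) (t : ℝ) : ℝ :=
  deriv (fun s => f x s) t


lemma maxsq_hasDeriv (u : ℝ) :
    HasDerivAt (fun v : ℝ => max v 0 ^ 2) (2 * max u 0) u := by
  rcases lt_trichotomy u 0 with h | h | h
  · have he : (fun v : ℝ => max v 0 ^ 2) =ᶠ[nhds u] fun _ => 0 := by
      filter_upwards [eventually_lt_nhds h] with v hv
      simp [max_eq_right hv.le]
    have h0 : HasDerivAt (fun _ : ℝ => (0 : ℝ)) (2 * max u 0) u := by
      simpa [max_eq_right h.le] using hasDerivAt_const u (0 : ℝ)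
    exact h0.congr_of_eventuallyEq he
  · subst h
    rw [hasDerivAt_iff_tendsto]
    simp only [max_self, sub_zero, ne_eq, OfNat.ofNat_ne_zero, not_false_eq_true, zero_pow,
      mul_zero, smul_zero, Real.norm_eq_abs]
    have hb : ∀ v : ℝ, |v|⁻¹ * |max v 0 ^ 2| ≤ |v| := by
      intro v
      rcases eq_or_ne v 0 with rfl | hv
      · simp
      · have h1 : |max v 0 ^ 2| ≤ |v| ^ 2 := by
          have hm : |max v 0| ≤ |v| := by
            rcases le_or_gt v 0 with h | h
            · simp [max_eq_right h, abs_nonneg]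
            · simp [max_eq_left h.le]
          calc |max v 0 ^ 2| = |max v 0| ^ 2 := abs_pow _ _
            _ ≤ |v| ^ 2 := pow_le_pow_left₀ (abs_nonneg _) hm 2
        have h2 := mul_le_mul_of_nonneg_left h1 (inv_nonneg.2 (abs_nonneg v))
        refine h2.trans (le_of_eq ?_)
        rw [sq, ← mul_assoc, inv_mul_cancel₀ (by simpa using hv), one_mul]
    refine squeeze_zero (fun v => by positivity) hb ?_
    simpa using (continuous_abs).tendsto (0:ℝ)
  · have he : (fun v : ℝ => max v 0 ^ 2) =ᶠ[nhds u] fun v => v ^ 2 := by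
      filter_upwards [eventually_gt_nhds h] with v hv
      simp [max_eq_left hv.le]
    have h0 : HasDerivAt (fun v : ℝ => v ^ 2) (2 * max u 0) u := by
      simpa [max_eq_left h.le, mul_comm] using hasDerivAt_pow 2 u
    exact h0.congr_of_eventuallyEq he

lemma maxcube_hasDeriv (u : ℝ) :
    HasDerivAt (fun v : ℝ => max v 0 ^ 3) (3 * max u 0 ^ 2) u := by
  have hid : HasDerivAt (fun v : ℝ => v) 1 u := hasDerivAt_id u
  have h : HasDerivAt (fun v : ℝ => max v 0 ^ 2 * v) (2 * max u 0 * u + max u 0 ^ 2 * 1) u := (maxsq_hasDeriv u).mul hid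
  have heq : (fun v : ℝ => max v 0 ^ 2 * v) = fun v : ℝ => max v 0 ^ 3 := by
    funext v
    rcases le_or_gt v 0 with h | h
    · simp [max_eq_right h]
    · simp [max_eq_left h.le]; ring
  have hval : 2 * max u 0 * u + max u 0 ^ 2 * 1 = 3 * max u 0 ^ 2 := by
    rcases le_or_gt u 0 with h | h
    · simp [max_eq_right h]
    · simp [max_eq_left h.le]; ring
  rw [heq, hval] at h
  exact h


noncomputable def phi (b s : ℝ) : ℝ := Real.log (1 + max (s - b) 0 ^ 3)
noncomputable def phi1 (b s : ℝ) : ℝ := 3 * max (s - b) 0 ^ 2 / (1 + max (s - b) 0 ^ 3)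
noncomputable def phi2 (b s : ℝ) : ℝ :=
  (6 * max (s - b) 0 * (1 + max (s - b) 0 ^ 3) -
    3 * max (s - b) 0 ^ 2 * (3 * max (s - b) 0 ^ 2)) / (1 + max (s - b) 0 ^ 3) ^ 2

lemma denom_pos (b s : ℝ) : 0 < 1 + max (s - b) 0 ^ 3 := by positivity

lemma cube_sub_hasDeriv (b s : ℝ) :
    HasDerivAt (fun t : ℝ => max (t - b) 0 ^ 3) (3 * max (s - b) 0 ^ 2) s := by
  simpa [Function.comp_def] using (maxcube_hasDeriv (s - b)).comp s ((hasDerivAt_id s).sub_const b)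

lemma sq_sub_hasDeriv (b s : ℝ) :
    HasDerivAt (fun t : ℝ => max (t - b) 0 ^ 2) (2 * max (s - b) 0) s := by
  simpa [Function.comp_def] using (maxsq_hasDeriv (s - b)).comp s ((hasDerivAt_id s).sub_const b)

lemma phi_hasDeriv (b s : ℝ) : HasDerivAt (phi b) (phi1 b s) s := by
  have h1 : HasDerivAt (fun t : ℝ => 1 + max (t - b) 0 ^ 3) (3 * max (s - b) 0 ^ 2) s :=
    (cube_sub_hasDeriv b s).const_add 1
  have := h1.log (ne_of_gt (denom_pos b s))
  exact this

lemma phi1_hasDeriv (b s : ℝ) : HasDerivAt (phi1 b) (phi2 b s) s := by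
  have hn : HasDerivAt (fun t : ℝ => 3 * max (t - b) 0 ^ 2) (6 * max (s - b) 0) s := by
    have := (sq_sub_hasDeriv b s).const_mul 3
    rw [show (6 * max (s - b) 0) = 3 * (2 * max (s - b) 0) by ring]
    exact this
  have hd : HasDerivAt (fun t : ℝ => 1 + max (t - b) 0 ^ 3) (3 * max (s - b) 0 ^ 2) s :=
    (cube_sub_hasDeriv b s).const_add 1
  have := hn.div hd (ne_of_gt (denom_pos b s))
  exact this

lemma phi_nonneg (b s : ℝ) : 0 ≤ phi b s :=
  by
  have h : (0:ℝ) ≤ max (s - b) 0 ^ 3 := by positivity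
  exact Real.log_nonneg (by linarith)

lemma phi1_zero {b s : ℝ} (h : s ≤ b) : phi1 b s = 0 := by
  simp [phi1, max_eq_right (sub_nonpos.2 h)]

lemma phi2_zero {b s : ℝ} (h : s ≤ b) : phi2 b s = 0 := by
  simp [phi2, max_eq_right (sub_nonpos.2 h)]

lemma phi_large {b c s : ℝ} (hc : 0 ≤ c) (hs : b + Real.exp c ≤ s) : c ≤ phi b s := by
  have h1 : Real.exp c ≤ s - b := by linarith
  have h2 : (1:ℝ) ≤ Real.exp c := Real.one_le_exp hc
  have hm : max (s - b) 0 = s - b := max_eq_left (by linarith)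
  have h3 : Real.exp c ≤ 1 + max (s - b) 0 ^ 3 := by
    rw [hm]
    have hsb : (1:ℝ) ≤ s - b := by linarith
    have h4 : (1:ℝ) ≤ (s - b) ^ 2 := by nlinarith
    have h5 := mul_le_mul_of_nonneg_left h4 (by linarith : (0:ℝ) ≤ s - b)
    nlinarith [h5]
  rw [phi, ← Real.log_exp c]
  exact Real.log_le_log (Real.exp_pos c) h3


noncomputable def kk (d : ℕ) (b C : ℝ) : ℝ :=
  24 * b * (b + C) + ((24 + 6 * d) * (b + C) + 24 * b) + (24 + 6 * d)

lemma kk_nonneg {d : ℕ} {b C : ℝ} (hb : 1 ≤ b) (hC : 0 < C) : 0 ≤ kk d b C := by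
  have hd : (0:ℝ) ≤ d := Nat.cast_nonneg d
  unfold kk; nlinarith

lemma lapbound (d : ℕ) {b C s A : ℝ} (hb : 1 ≤ b) (hC : 0 < C) (hA : 0 < A)
    (hupper : b < s → A ≤ s + C) :
    A * (phi2 b s * (4 * s) + phi1 b s * (2 * d)) ≤ kk d b C * (phi b s + 1) := by
  have hkk := kk_nonneg (d := d) hb hC
  have hRHS : 0 ≤ kk d b C * (phi b s + 1) :=
    mul_nonneg hkk (by linarith [phi_nonneg b s])
  rcases le_or_gt s b with h | h
  · rw [phi1_zero h, phi2_zero h]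
    simpa using hRHS
  · have hu0 : (0:ℝ) < s - b := by linarith
    have hm : max (s - b) 0 = s - b := max_eq_left hu0.le
    set u : ℝ := s - b with hu
    have hD0 : (0:ℝ) < 1 + u ^ 3 := by positivity
    have hs0 : (0:ℝ) < s := by linarith
    set D : ℝ := 1 + u ^ 3 with hD
    have hd0 : (0:ℝ) ≤ d := Nat.cast_nonneg d
    -- Step A : L ≤ (24*s*u + 6*d*u^2)/D
    have hphi1 : phi1 b s = 3 * u ^ 2 / D := by rw [phi1, hm]
    have hphi2 : phi2 b s ≤ 6 * u / D := by
      rw [phi2, hm]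
      rw [div_le_div_iff₀ (by positivity) hD0]
      nlinarith [pow_nonneg hu0.le 4, hD0]
    have hL : phi2 b s * (4 * s) + phi1 b s * (2 * d) ≤ (24 * s * u + 6 * d * u ^ 2) / D := by
      have h1 : phi2 b s * (4 * s) ≤ 6 * u / D * (4 * s) :=
        mul_le_mul_of_nonneg_right hphi2 (by positivity)
      have h2 : 6 * u / D * (4 * s) + 3 * u ^ 2 / D * (2 * d) = (24 * s * u + 6 * d * u ^ 2) / D := by
        field_simp; ring
      rw [hphi1]; linarith
    rcases le_or_gt (phi2 b s * (4 * s) + phi1 b s * (2 * d)) 0 with hL0 | hL0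
    · exact le_trans (mul_nonpos_of_nonneg_of_nonpos hA.le hL0) hRHS
    · have hAs : A ≤ s + C := hupper h
      have step1 : A * (phi2 b s * (4 * s) + phi1 b s * (2 * d))
          ≤ (s + C) * ((24 * s * u + 6 * d * u ^ 2) / D) := by
        calc A * (phi2 b s * (4 * s) + phi1 b s * (2 * d))
            ≤ (s + C) * (phi2 b s * (4 * s) + phi1 b s * (2 * d)) :=
              mul_le_mul_of_nonneg_right hAs hL0.le
          _ ≤ (s + C) * ((24 * s * u + 6 * d * u ^ 2) / D) :=
              mul_le_mul_of_nonneg_left hL (by linarith)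
      have step2 : (s + C) * ((24 * s * u + 6 * d * u ^ 2) / D) ≤ kk d b C := by
        rw [mul_div_assoc']
        rw [div_le_iff₀ hD0]
        have hgoal : (s + C) * (24 * s * u + 6 * d * u ^ 2)
            = 24 * b * (b + C) * u + ((24 + 6 * d) * (b + C) + 24 * b) * u ^ 2
              + (24 + 6 * d) * u ^ 3 := by
          rw [hu]; ring
        have h1 : u ≤ D := by rw [hD]; nlinarith [sq_nonneg (u - 1), sq_nonneg (u + 1), hu0]
        have h2 : u ^ 2 ≤ D := by rw [hD]; nlinarith [sq_nonneg (u - 1), hu0, sq_nonneg u]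
        have h3 : u ^ 3 ≤ D := by rw [hD]; linarith
        have hbC : (0:ℝ) ≤ b + C := by linarith
        have hc1 : (0:ℝ) ≤ 24 * b * (b + C) := mul_nonneg (by linarith) hbC
        have hc2 : (0:ℝ) ≤ (24 + 6 * d) * (b + C) + 24 * b := by
          have := mul_nonneg (by linarith : (0:ℝ) ≤ 24 + 6 * (d:ℝ)) hbC
          linarith
        have hc3 : (0:ℝ) ≤ 24 + 6 * d := by linarith
        have e1 := mul_le_mul_of_nonneg_left h1 hc1
        have e2 := mul_le_mul_of_nonneg_left h2 hc2
        have e3 := mul_le_mul_of_nonneg_left h3 hc3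
        have hexp : kk d b C * D = 24 * b * (b + C) * D + ((24 + 6 * d) * (b + C) + 24 * b) * D
            + (24 + 6 * d) * D := by rw [kk]; ring
        rw [hgoal, hexp]
        linarith
      have hfin : kk d b C ≤ kk d b C * (phi b s + 1) := by
        have := mul_nonneg hkk (phi_nonneg b s)
        nlinarith
      linarith




noncomputable def qq {d : ℕ} (x : EuclideanSpace ℝ (Fin d)) : ℝ := ∑ i, x i ^ 2

noncomputable def DQ {d : ℕ} (x : EuclideanSpace ℝ (Fin d)) :
    EuclideanSpace ℝ (Fin d) →L[ℝ] ℝ :=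
  ∑ i, ((x i) • EuclideanSpace.proj i + (x i) • EuclideanSpace.proj i)

lemma qq_hasFDeriv {d : ℕ} (x : EuclideanSpace ℝ (Fin d)) : HasFDerivAt qq (DQ x) x := by
  have : HasFDerivAt (fun y : EuclideanSpace ℝ (Fin d) => ∑ i, y i * y i) (DQ x) x := by
    apply HasFDerivAt.fun_sum
    intro i _
    exact (EuclideanSpace.proj (𝕜 := ℝ) i).hasFDerivAt.mul
      (EuclideanSpace.proj (𝕜 := ℝ) i).hasFDerivAt
  have he : qq (d := d) = fun y => ∑ i, y i * y i := by
    funext y; simp [qq, sq]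
  rw [he]; exact this

lemma DQ_single {d : ℕ} (x : EuclideanSpace ℝ (Fin d)) (j : Fin d) :
    DQ x (EuclideanSpace.single j (1:ℝ)) = 2 * x j := by
  simp only [DQ, ContinuousLinearMap.sum_apply, ContinuousLinearMap.add_apply,
    ContinuousLinearMap.smul_apply, PiLp.proj_apply, EuclideanSpace.single_apply,
    smul_eq_mul]
  simp only [mul_one, mul_zero, mul_ite, Finset.sum_add_distrib, Finset.sum_ite_eq',
    Finset.mem_univ, if_true]
  ring

lemma qq_norm {d : ℕ} (x : EuclideanSpace ℝ (Fin d)) : qq x = ‖x‖ ^ 2 := by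
  rw [EuclideanSpace.norm_eq, Real.sq_sqrt (by positivity)]
  simp [qq, Real.norm_eq_abs, sq_abs]

lemma qq_nonneg {d : ℕ} (x : EuclideanSpace ℝ (Fin d)) : 0 ≤ qq x := by
  rw [qq_norm]; positivity

noncomputable def HH {d : ℕ} (b : ℝ) (x : EuclideanSpace ℝ (Fin d)) : ℝ := phi b (qq x)

lemma HH_hasFDeriv {d : ℕ} (b : ℝ) (x : EuclideanSpace ℝ (Fin d)) :
    HasFDerivAt (HH b) (phi1 b (qq x) • DQ x) x :=
  (phi_hasDeriv b (qq x)).comp_hasFDerivAt x (qq_hasFDeriv x)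

lemma pd_HH {d : ℕ} (b : ℝ) (i : Fin d) (x : EuclideanSpace ℝ (Fin d)) :
    pd (HH b) i x = phi1 b (qq x) * (2 * x i) := by
  rw [pd, (HH_hasFDeriv b x).fderiv]
  simp [DQ_single, smul_eq_mul]

lemma pdHH_hasFDeriv {d : ℕ} (b : ℝ) (i : Fin d) (x : EuclideanSpace ℝ (Fin d)) :
    HasFDerivAt (fun y : EuclideanSpace ℝ (Fin d) => pd (HH b) i y)
      (phi1 b (qq x) • ((2:ℝ) • (EuclideanSpace.proj i : EuclideanSpace ℝ (Fin d) →L[ℝ] ℝ))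
        + (2 * x i) • (phi2 b (qq x) • DQ x)) x := by
  have hA : HasFDerivAt (fun y : EuclideanSpace ℝ (Fin d) => phi1 b (qq y))
      (phi2 b (qq x) • DQ x) x :=
    (phi1_hasDeriv b (qq x)).comp_hasFDerivAt x (qq_hasFDeriv x)
  have hB : HasFDerivAt (fun y : EuclideanSpace ℝ (Fin d) => 2 * y i)
      ((2:ℝ) • (EuclideanSpace.proj i : EuclideanSpace ℝ (Fin d) →L[ℝ] ℝ)) x :=
    (EuclideanSpace.proj (𝕜 := ℝ) i).hasFDerivAt.const_mul 2
  have h := hA.mul hB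
  have he : (fun y : EuclideanSpace ℝ (Fin d) => pd (HH b) i y)
      = fun y => phi1 b (qq y) * (2 * y i) := funext (fun y => pd_HH b i y)
  rw [he]
  exact h

lemma pd2_HH {d : ℕ} (b : ℝ) (i : Fin d) (x : EuclideanSpace ℝ (Fin d)) :
    pd (fun y => pd (HH b) i y) i x
      = phi2 b (qq x) * (2 * x i) * (2 * x i) + phi1 b (qq x) * 2 := by
  rw [pd, (pdHH_hasFDeriv b i x).fderiv]
  simp only [ContinuousLinearMap.add_apply, ContinuousLinearMap.smul_apply, PiLp.proj_apply,
    EuclideanSpace.single_apply, smul_eq_mul, DQ_single, if_pos]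
  ring

lemma lap_HH {d : ℕ} (b : ℝ) (x : EuclideanSpace ℝ (Fin d)) :
    lap (HH b) x = phi2 b (qq x) * (4 * qq x) + phi1 b (qq x) * (2 * d) := by
  rw [lap]
  rw [Finset.sum_congr rfl (fun i _ => pd2_HH b i x)]
  rw [Finset.sum_add_distrib, Finset.sum_const, Finset.card_univ, Fintype.card_fin]
  have h1 : ∑ i : Fin d, phi2 b (qq x) * (2 * x i) * (2 * x i)
      = phi2 b (qq x) * (4 * qq x) := by
    rw [qq, Finset.mul_sum, Finset.mul_sum]
    exact Finset.sum_congr rfl (fun i _ => by ring)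
  rw [h1, nsmul_eq_mul]
  ring

lemma HH_diff {d : ℕ} (b : ℝ) : Differentiable ℝ (HH (d := d) b) :=
  fun x => (HH_hasFDeriv b x).differentiableAt

lemma pdHH_diff {d : ℕ} (b : ℝ) (i : Fin d) :
    Differentiable ℝ (fun y : EuclideanSpace ℝ (Fin d) => pd (HH b) i y) :=
  fun x => (pdHH_hasFDeriv b i x).differentiableAt


lemma left_deriv_nonneg {f : ℝ → ℝ} {A t : ℝ} (ht : 0 < t)
    (hd : HasDerivAt f A t) (hmax : ∀ s ∈ Icc 0 t, f s ≤ f t) : 0 ≤ A := by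
  have hslope := hasDerivAt_iff_tendsto_slope.mp hd
  have hmono : nhdsWithin t (Iio t) ≤ nhdsWithin t ({t}ᶜ) :=
    nhdsWithin_mono t (fun s hs => ne_of_lt hs)
  have h2 : Tendsto (slope f t) (nhdsWithin t (Iio t)) (nhds A) := hslope.mono_left hmono
  have hev : ∀ᶠ s in nhdsWithin t (Iio t), 0 ≤ slope f t s := by
    filter_upwards [Ioo_mem_nhdsLT_of_mem (right_mem_Ioc.mpr ht : t ∈ Ioc 0 t)] with s hs
    rw [slope_def_field]
    rw [← neg_div_neg_eq]
    exact div_nonneg (by linarith [hmax s ⟨hs.1.le, hs.2.le⟩]) (by linarith [hs.2])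
  exact ge_of_tendsto h2 hev

lemma second_deriv_test {f f' : ℝ → ℝ} {c : ℝ}
    (hd : ∀ s, HasDerivAt f (f' s) s) (hd2 : HasDerivAt f' c 0)
    (hmax : IsLocalMax f 0) : c ≤ 0 := by
  by_contra hc
  push_neg at hc
  have hf'0 : f' 0 = 0 := by
    have h := hmax.deriv_eq_zero
    rwa [(hd 0).deriv] at h
  have hslope := hasDerivAt_iff_tendsto_slope.mp hd2
  have hmono : nhdsWithin 0 (Ioi 0) ≤ nhdsWithin 0 ({(0:ℝ)}ᶜ) :=
    nhdsWithin_mono 0 (fun s hs => ne_of_gt hs)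
  have h2 : Tendsto (slope f' 0) (nhdsWithin 0 (Ioi 0)) (nhds c) := hslope.mono_left hmono
  have hev : ∀ᶠ s in nhdsWithin 0 (Ioi 0), 0 < slope f' 0 s :=
    h2.eventually (eventually_gt_nhds hc)
  have hev2 : ∀ᶠ s in nhdsWithin 0 (Ioi 0), 0 < f' s := by
    filter_upwards [hev, self_mem_nhdsWithin] with s h1 h3
    rw [slope_def_field, hf'0, sub_zero, sub_zero] at h1
    have h4 : (0:ℝ) < f' s / s * s := mul_pos h1 h3
    rwa [div_mul_cancel₀ _ (ne_of_gt h3)] at h4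
  obtain ⟨δ, hδ, hsub⟩ := mem_nhdsGT_iff_exists_Ioo_subset.mp hev2
  have hevmax : ∀ᶠ s in nhds 0, f s ≤ f 0 := hmax
  rw [Metric.eventually_nhds_iff] at hevmax
  obtain ⟨δ', hδ', hball⟩ := hevmax
  set t : ℝ := min δ δ' / 2 with htdef
  have hδ0 : (0:ℝ) < δ := hδ
  have ht0 : 0 < t := by positivity
  have htδ : t < δ := by
    have : min δ δ' ≤ δ := min_le_left _ _
    simp only [htdef]; linarith
  have htδ' : t < δ' := by
    have : min δ δ' ≤ δ' := min_le_right _ _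
    simp only [htdef]; linarith
  have hSM : StrictMonoOn f (Icc 0 t) := by
    apply strictMonoOn_of_deriv_pos (convex_Icc 0 t)
    · exact fun s _ => (hd s).differentiableAt.continuousAt.continuousWithinAt
    · intro s hs
      rw [interior_Icc] at hs
      rw [(hd s).deriv]
      exact hsub ⟨hs.1, lt_trans hs.2 htδ⟩
  have h5 : f 0 < f t := hSM ⟨le_refl 0, ht0.le⟩ ⟨ht0.le, le_refl t⟩ ht0
  have h6 : f t ≤ f 0 := hball (by rw [Real.dist_eq, sub_zero, abs_of_pos ht0]; exact htδ')
  linarith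




lemma line_hasDerivAt {d : ℕ} (x₁ : EuclideanSpace ℝ (Fin d)) (i : Fin d) (s : ℝ) :
    HasDerivAt (fun s : ℝ => x₁ + s • EuclideanSpace.single i (1:ℝ))
      (EuclideanSpace.single i (1:ℝ)) s := by
  simpa using ((hasDerivAt_id s).smul_const (EuclideanSpace.single i (1:ℝ))).const_add x₁

lemma lap_term_nonpos {d : ℕ} {W : EuclideanSpace ℝ (Fin d) → ℝ}
    {x₁ : EuclideanSpace ℝ (Fin d)} (i : Fin d)
    (hWd : Differentiable ℝ W) (hpdWd : DifferentiableAt ℝ (fun y => pd W i y) x₁)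
    (hmax : IsLocalMax W x₁) : pd (fun y => pd W i y) i x₁ ≤ 0 := by
  set e := EuclideanSpace.single i (1:ℝ) with he
  set l : ℝ → EuclideanSpace ℝ (Fin d) := fun s => x₁ + s • e with hl
  have hl0 : l 0 = x₁ := by simp [hl]
  have hline := line_hasDerivAt x₁ i
  have hd : ∀ s, HasDerivAt (fun s => W (l s)) (pd W i (l s)) s := by
    intro s
    exact (hWd (l s)).hasFDerivAt.comp_hasDerivAt s (hline s)
  have hd2 : HasDerivAt (fun s => pd W i (l s)) (pd (fun y => pd W i y) i x₁) 0 := by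
    have hpd' := hpdWd.hasFDerivAt
    rw [← hl0] at hpd'
    have h := hpd'.comp_hasDerivAt 0 (hline 0)
    simpa [hl0, pd, Function.comp_def] using h
  have hmax' : IsLocalMax (fun s => W (l s)) 0 := by
    have hcl : ContinuousAt l 0 := (hline 0).continuousAt
    have h1 : Tendsto l (nhds 0) (nhds x₁) := by rw [← hl0]; exact hcl
    have h2 : ∀ᶠ s in nhds (0:ℝ), W (l s) ≤ W x₁ := h1.eventually hmax
    simpa [IsLocalMax, IsMaxFilter, hl0] using h2
  exact second_deriv_test hd hd2 hmax'

lemma interior_lap_le {d : ℕ} {b cE : ℝ} {vt : EuclideanSpace ℝ (Fin d) → ℝ}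
    (hv2 : ContDiff ℝ 2 vt) {x₁ : EuclideanSpace ℝ (Fin d)}
    (hWmax : IsLocalMax (fun y => vt y - cE * HH b y) x₁) :
    lap vt x₁ ≤ cE * lap (HH b) x₁ := by
  set W : EuclideanSpace ℝ (Fin d) → ℝ := fun y => vt y - cE * HH b y with hWdef
  have hvd : Differentiable ℝ vt := hv2.differentiable (by norm_num)
  have hWfd : ∀ y, HasFDerivAt W (fderiv ℝ vt y - cE • (phi1 b (qq y) • DQ y)) y :=
    fun y => (hvd y).hasFDerivAt.sub ((HH_hasFDeriv b y).const_mul cE)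
  have hWd : Differentiable ℝ W := fun y => (hWfd y).differentiableAt
  have hpdv_cd : ∀ i : Fin d, ContDiff ℝ 1 (fun y => pd vt i y) := by
    intro i
    simp only [pd]
    exact (hv2.fderiv_right (by norm_num)).clm_apply contDiff_const
  have pdW_eq : ∀ (i : Fin d) (y : EuclideanSpace ℝ (Fin d)),
      pd W i y = pd vt i y - cE * pd (HH b) i y := by
    intro i y
    simp only [pd]
    rw [(hWfd y).fderiv, (HH_hasFDeriv b y).fderiv]
    simp [ContinuousLinearMap.sub_apply, ContinuousLinearMap.smul_apply, smul_eq_mul]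
  have key : ∀ i : Fin d, pd (fun y => pd W i y) i x₁ ≤ 0 ∧
      pd (fun y => pd W i y) i x₁
        = pd (fun y => pd vt i y) i x₁ - cE * pd (fun y => pd (HH b) i y) i x₁ := by
    intro i
    have hfun : (fun y => pd W i y) = fun y => pd vt i y - cE * pd (HH b) i y :=
      funext (pdW_eq i)
    have hfd2 : HasFDerivAt (fun y => pd W i y)
        (fderiv ℝ (fun y => pd vt i y) x₁
          - cE • (fderiv ℝ (fun y => pd (HH b) i y) x₁)) x₁ := by
      rw [hfun]
      exact (((hpdv_cd i).differentiable (by norm_num)) x₁).hasFDerivAt.sub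
        (((pdHH_diff b i) x₁).hasFDerivAt.const_mul cE)
    have heq : pd (fun y => pd W i y) i x₁
        = pd (fun y => pd vt i y) i x₁ - cE * pd (fun y => pd (HH b) i y) i x₁ := by
      rw [pd, hfd2.fderiv]
      simp [pd, ContinuousLinearMap.sub_apply, ContinuousLinearMap.smul_apply, smul_eq_mul]
    exact ⟨lap_term_nonpos i hWd hfd2.differentiableAt hWmax, heq⟩
  have hlap : lap vt x₁ = lap W x₁ + cE * lap (HH b) x₁ := by
    rw [lap, lap, lap, Finset.mul_sum, ← Finset.sum_add_distrib]
    refine Finset.sum_congr rfl (fun i _ => ?_)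
    have := (key i).2
    linarith
  have hWle : lap W x₁ ≤ 0 := Finset.sum_nonpos (fun i _ => (key i).1)
  linarith

set_option maxHeartbeats 1000000 in
theorem stmt_8 (d : ℕ) (T : ℝ) (hT : 0 < T)
    (a : EuclideanSpace ℝ (Fin d) → ℝ → ℝ) (a0 C : ℝ) (ha0 : 0 < a0)
    (ε : ℝ → ℝ) (hε : Filter.Tendsto ε Filter.atTop (nhds 0))
    (ha : ∀ (x : EuclideanSpace ℝ (Fin d)), ∀ t ∈ Set.Icc 0 T,
      a0 ≤ a x t ∧ a x t ≤ ε ‖x‖ * ‖x‖ ^ 2 + C)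
    (v : EuclideanSpace ℝ (Fin d) → ℝ → ℝ)
    (hcont : Continuous (fun p : EuclideanSpace ℝ (Fin d) × ℝ => v p.1 p.2))
    (hx2 : ∀ t ∈ Set.Icc 0 T, ContDiff ℝ 2 (fun y => v y t))
    (ht1 : ∀ (x : EuclideanSpace ℝ (Fin d)), ∀ t ∈ Set.Icc 0 T,
      DifferentiableAt ℝ (fun s => v x s) t)
    (M : ℝ) (habove : ∀ (x : EuclideanSpace ℝ (Fin d)), ∀ t ∈ Set.Icc 0 T, v x t ≤ M)
    (hL : ∀ (x : EuclideanSpace ℝ (Fin d)), ∀ t ∈ Set.Icc 0 T,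
      dt v x t - a x t * lap (fun y => v y t) x ≤ 0) :
    ∀ (x : EuclideanSpace ℝ (Fin d)), ∀ t ∈ Set.Icc 0 T,
      v x t ≤ ⨆ y : EuclideanSpace ℝ (Fin d), v y 0 := by
  intro x0 t0 ht0
  have hT0 : (0:ℝ) ∈ Set.Icc 0 T := ⟨le_refl 0, hT.le⟩
  have hSb : BddAbove (Set.range fun y : EuclideanSpace ℝ (Fin d) => v y 0) := by
    refine ⟨M, ?_⟩
    rintro z ⟨y, rfl⟩
    exact habove y 0 hT0
  set S : ℝ := ⨆ y : EuclideanSpace ℝ (Fin d), v y 0 with hSdef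
  have hvS : ∀ y : EuclideanSpace ℝ (Fin d), v y 0 ≤ S := fun y => le_ciSup hSb y
  have hSM : S ≤ M := ciSup_le (fun y => habove y 0 hT0)
  have hC : 0 < C := by
    have h1 := (ha 0 0 hT0).1
    have h2 := (ha 0 0 hT0).2
    simp only [norm_zero] at h2
    nlinarith
  -- choose r0 with ε r ≤ 1 for r ≥ r0
  obtain ⟨r0', hr0'⟩ : ∃ r0', ∀ r ≥ r0', ε r ≤ 1 := by
    have h := hε.eventually (eventually_lt_nhds (by norm_num : (0:ℝ) < 1))
    rw [eventually_atTop] at h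
    obtain ⟨r0', h⟩ := h
    exact ⟨r0', fun r hr => (h r hr).le⟩
  set r0 : ℝ := max r0' 0 with hr0def
  set b : ℝ := max 1 (r0 ^ 2) with hbdef
  have hb : 1 ≤ b := le_max_left _ _
  set k : ℝ := kk d b C with hkdef
  have hk : 0 ≤ k := kk_nonneg hb hC
  -- key bound
  have keybound : ∀ (x : EuclideanSpace ℝ (Fin d)), ∀ t ∈ Set.Icc 0 T,
      a x t * lap (HH b) x ≤ k * (HH b x + 1) := by
    intro x t ht
    rw [lap_HH]
    have hA : 0 < a x t := lt_of_lt_of_le ha0 (ha x t ht).1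
    refine lapbound d hb hC hA ?_
    intro hbq
    have hxnorm : r0 < ‖x‖ := by
      by_contra hcon
      push_neg at hcon
      have : ‖x‖ ^ 2 ≤ r0 ^ 2 := by
        have h0 : (0:ℝ) ≤ r0 := le_max_right _ _
        nlinarith [norm_nonneg x]
      rw [← qq_norm] at this
      have : qq x ≤ b := le_trans this (le_max_right _ _)
      linarith
    have hε1 : ε ‖x‖ ≤ 1 := hr0' ‖x‖ (le_trans (le_max_left _ _) hxnorm.le)
    have h2 := (ha x t ht).2
    have h3 : ε ‖x‖ * ‖x‖ ^ 2 ≤ 1 * ‖x‖ ^ 2 :=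
      mul_le_mul_of_nonneg_right hε1 (by positivity)
    rw [qq_norm]
    nlinarith
  -- main estimate
  have main : ∀ η : ℝ, 0 < η → ∀ σ : ℝ, 0 < σ →
      v x0 t0 ≤ S + η * Real.exp (k * T) * (HH b x0 + 1) + σ * T := by
    intro η hη σ hσ
    set cc : ℝ := max ((M - S) / η) 0 with hccdef
    have hcc : 0 ≤ cc := le_max_right _ _
    set R : ℝ := max (max ‖x0‖ 1) (Real.sqrt (b + Real.exp cc)) with hRdef
    have hR1 : ‖x0‖ ≤ R := le_trans (le_max_left _ _) (le_max_left _ _)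
    have hRpos : 0 < R := lt_of_lt_of_le one_pos (le_trans (le_max_right _ _) (le_max_left _ _))
    have hR2 : b + Real.exp cc ≤ R ^ 2 := by
      have h1 : Real.sqrt (b + Real.exp cc) ≤ R := le_max_right _ _
      have h2 : (0:ℝ) ≤ b + Real.exp cc := by positivity
      nlinarith [Real.sq_sqrt h2, Real.sqrt_nonneg (b + Real.exp cc)]
    have hHbdry : ∀ x : EuclideanSpace ℝ (Fin d), ‖x‖ = R → M - S ≤ η * HH b x := by
      intro x hx
      have hqx : qq x = R ^ 2 := by rw [qq_norm, hx]
      have hphi : cc ≤ HH b x := by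
        rw [HH, hqx]
        exact phi_large hcc hR2
      have h1 : η * cc ≤ η * HH b x := mul_le_mul_of_nonneg_left hphi hη.le
      have h2 : M - S ≤ η * cc := by
        have h3 : (M - S) / η ≤ cc := le_max_left _ _
        have h4 := mul_le_mul_of_nonneg_left h3 hη.le
        rwa [mul_div_cancel₀ _ (ne_of_gt hη)] at h4
      linarith
    set F : EuclideanSpace ℝ (Fin d) × ℝ → ℝ :=
      fun p => v p.1 p.2 - S - η * Real.exp (k * p.2) * (HH b p.1 + 1) - σ * p.2 with hFdef
    have hFcont : Continuous F := by
      apply Continuous.sub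
      apply Continuous.sub
      · exact hcont.sub continuous_const
      · exact (continuous_const.mul
          (Real.continuous_exp.comp (continuous_const.mul continuous_snd))).mul
          (((HH_diff b).continuous.comp continuous_fst).add continuous_const)
      · exact continuous_const.mul continuous_snd
    set K : Set (EuclideanSpace ℝ (Fin d) × ℝ) :=
      Metric.closedBall (0 : EuclideanSpace ℝ (Fin d)) R ×ˢ Set.Icc 0 T with hKdef
    have hK : IsCompact K := (isCompact_closedBall _ _).prod isCompact_Icc
    have hx0K : (x0, t0) ∈ K := by
      constructor
      · simpa [Metric.mem_closedBall, dist_zero_right] using hR1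
      · exact ht0
    obtain ⟨p, hpK, hpmax⟩ := hK.exists_isMaxOn ⟨(x0, t0), hx0K⟩ hFcont.continuousOn
    obtain ⟨x₁, t₁⟩ := p
    have hx₁ : ‖x₁‖ ≤ R := by
      have := hpK.1
      simpa [Metric.mem_closedBall, dist_zero_right] using this
    have ht₁ : t₁ ∈ Set.Icc 0 T := hpK.2
    have hHx₁ : 0 ≤ HH b x₁ := phi_nonneg _ _
    have hFp : F (x₁, t₁) ≤ 0 := by
      rcases eq_or_lt_of_le ht₁.1 with h0 | ht₁pos
      · -- t₁ = 0
        have hexp1 : Real.exp (k * t₁) = 1 := by rw [← h0, mul_zero, Real.exp_zero]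
        have h1 : v x₁ t₁ ≤ S := by rw [← h0]; exact hvS x₁
        have h2 : 0 ≤ η * Real.exp (k * t₁) * (HH b x₁ + 1) := by
          rw [hexp1]; nlinarith
        simp only [hFdef]
        rw [← h0]
        simp only [mul_zero, Real.exp_zero]
        have h1' : v x₁ 0 ≤ S := hvS x₁
        nlinarith
      · rcases eq_or_lt_of_le hx₁ with hxR | hxlt
        · -- boundary
          have h1 : v x₁ t₁ ≤ M := habove x₁ t₁ ht₁
          have h2 : M - S ≤ η * HH b x₁ := hHbdry x₁ hxR
          have h3 : (1:ℝ) ≤ Real.exp (k * t₁) :=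
            Real.one_le_exp (mul_nonneg hk ht₁.1)
          have h4 : η * (HH b x₁ + 1) ≤ η * Real.exp (k * t₁) * (HH b x₁ + 1) := by
            nlinarith
          have h5 : 0 ≤ σ * t₁ := mul_nonneg hσ.le ht₁.1
          simp only [hFdef]
          nlinarith
        · -- interior: contradiction
          exfalso
          set cE : ℝ := η * Real.exp (k * t₁) with hcEdef
          have hcE : 0 < cE := by positivity
          -- time derivative
          have hgd : HasDerivAt (fun s => F (x₁, s))
              (dt v x₁ t₁ - η * (Real.exp (k * t₁) * k) * (HH b x₁ + 1) - σ) t₁ := by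
            have hv : HasDerivAt (fun s => v x₁ s) (dt v x₁ t₁) t₁ :=
              (ht1 x₁ t₁ ht₁).hasDerivAt
            have hexp : HasDerivAt (fun s => Real.exp (k * s)) (Real.exp (k * t₁) * k) t₁ := by
              have h1 : HasDerivAt (fun s : ℝ => k * s) k t₁ := by
                simpa using (hasDerivAt_id t₁).const_mul k
              exact h1.exp
            have h2 := ((hexp.const_mul η).mul_const (HH b x₁ + 1))
            have h3 : HasDerivAt (fun s : ℝ => σ * s) σ t₁ := by
              simpa using (hasDerivAt_id t₁).const_mul σ
            exact ((hv.sub_const S).sub h2).sub h3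
          have hA : 0 ≤ dt v x₁ t₁ - η * (Real.exp (k * t₁) * k) * (HH b x₁ + 1) - σ := by
            refine left_deriv_nonneg ht₁pos hgd ?_
            intro s hs
            have hsK : (x₁, s) ∈ K := ⟨hpK.1, ⟨hs.1, le_trans hs.2 ht₁.2⟩⟩
            exact hpmax hsK
          -- space argument
          have hWmax : IsLocalMax (fun y => v y t₁ - cE * HH b y) x₁ := by
            have hball : Metric.ball x₁ (R - ‖x₁‖) ∈ nhds x₁ :=
              Metric.ball_mem_nhds _ (by linarith)
            filter_upwards [hball] with y hy
            have hyR : ‖y‖ ≤ R := by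
              have h1 : dist y x₁ < R - ‖x₁‖ := hy
              calc ‖y‖ ≤ ‖y - x₁‖ + ‖x₁‖ := by
                    simpa using norm_add_le (y - x₁) x₁
                _ ≤ R := by rw [← dist_eq_norm] at *; linarith
            have hyK : (y, t₁) ∈ K := by
              constructor
              · simpa [Metric.mem_closedBall, dist_zero_right] using hyR
              · exact ht₁
            have h2 : F (y, t₁) ≤ F (x₁, t₁) := hpmax hyK
            simp only [hFdef] at h2
            have h3 : η * Real.exp (k * t₁) * (HH b y + 1)
                = cE * HH b y + cE := by rw [hcEdef]; ring
            have h4 : η * Real.exp (k * t₁) * (HH b x₁ + 1)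
                = cE * HH b x₁ + cE := by rw [hcEdef]; ring
            simp only [h3, h4] at h2
            linarith
          have hlap := interior_lap_le (hx2 t₁ ht₁) hWmax
          -- combine
          have h5 := hL x₁ t₁ ht₁
          have h6 : a x₁ t₁ * lap (fun y => v y t₁) x₁
              ≤ a x₁ t₁ * (cE * lap (HH b) x₁) := by
            apply mul_le_mul_of_nonneg_left hlap
            linarith [lt_of_lt_of_le ha0 (ha x₁ t₁ ht₁).1]
          have h7 : a x₁ t₁ * (cE * lap (HH b) x₁) = cE * (a x₁ t₁ * lap (HH b) x₁) := by ring
          have h8 : a x₁ t₁ * lap (HH b) x₁ ≤ k * (HH b x₁ + 1) := keybound x₁ t₁ ht₁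
          have h9 : cE * (a x₁ t₁ * lap (HH b) x₁) ≤ cE * (k * (HH b x₁ + 1)) :=
            mul_le_mul_of_nonneg_left h8 hcE.le
          have h10 : cE * (k * (HH b x₁ + 1))
              = η * (Real.exp (k * t₁) * k) * (HH b x₁ + 1) := by rw [hcEdef]; ring
          linarith
    -- conclude from F (x0, t0) ≤ F (x₁, t₁) ≤ 0
    have hch : F (x0, t0) ≤ 0 := le_trans (hpmax hx0K) hFp
    simp only [hFdef] at hch
    have hHx0 : 0 ≤ HH b x0 := phi_nonneg _ _
    have hexp : Real.exp (k * t0) ≤ Real.exp (k * T) :=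
      Real.exp_le_exp.mpr (mul_le_mul_of_nonneg_left ht0.2 hk)
    have h1 : η * Real.exp (k * t0) * (HH b x0 + 1) ≤ η * Real.exp (k * T) * (HH b x0 + 1) :=
      mul_le_mul_of_nonneg_right (mul_le_mul_of_nonneg_left hexp hη.le) (by linarith)
    have h2 : σ * t0 ≤ σ * T := mul_le_mul_of_nonneg_left ht0.2 hσ.le
    linarith
  -- final limit argument
  by_contra hgt
  push_neg at hgt
  set δ : ℝ := v x0 t0 - S with hδdef
  have hδ : 0 < δ := by simp only [hδdef]; linarith
  set B : ℝ := Real.exp (k * T) * (HH b x0 + 1) with hBdef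
  have hB : 0 < B := by
    have := phi_nonneg b (qq x0)
    simp only [hBdef]
    have : (0:ℝ) < HH b x0 + 1 := by
      have := phi_nonneg b (qq x0)
      simp only [HH]; linarith
    positivity
  have h1 := main (δ / (2 * B)) (by positivity) (δ / (4 * T)) (by positivity)
  have h2 : δ / (2 * B) * Real.exp (k * T) * (HH b x0 + 1) = δ / 2 := by
    field_simp [hBdef]
    ring
  have h3 : δ / (4 * T) * T = δ / 4 := by field_simp
  rw [h2, h3] at h1
  linarith
end

section
/- (Barrier function is a supersolution) Define F_{s,β}(x,t) = (t+1)^{−s} exp(−|x|²/(4β(t+1))) for x ∈ ℝᵈ, t ≥ 0, with constants s, β > 0, and let w = C·F_{s,β} with C > 0. If a coefficient function a(x,t) satisfies 0 < a_0 ≤ a(x,t) ≤ β and s ≤ a_0 d/(2β), then ∂w/∂t − a(x,t) Δw ≥ 0 for all (x,t) with t ≥ 0. -/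
lemma sumsq_hasFDerivAt {d : ℕ} (x : EuclideanSpace ℝ (Fin d)) :
    HasFDerivAt (fun y : EuclideanSpace ℝ (Fin d) => ∑ j, y j ^ 2)
      (∑ j, (2 * x j) • (EuclideanSpace.proj j : EuclideanSpace ℝ (Fin d) →L[ℝ] ℝ)) x := by
  have h : ∀ j : Fin d, HasFDerivAt (fun y : EuclideanSpace ℝ (Fin d) => y j ^ 2)
      ((2 * x j) • (EuclideanSpace.proj j : EuclideanSpace ℝ (Fin d) →L[ℝ] ℝ)) x := by
    intro j
    have h0 := (EuclideanSpace.proj (𝕜 := ℝ) j).hasFDerivAt (x := x)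
    have := h0.fun_mul h0
    simpa [sq, two_mul, add_smul] using this
  exact HasFDerivAt.fun_sum (fun j _ => h j)

lemma Phi_hasFDerivAt {d : ℕ} (A k : ℝ) (x : EuclideanSpace ℝ (Fin d)) :
    HasFDerivAt (fun y : EuclideanSpace ℝ (Fin d) => A * Real.exp ((∑ j, y j ^ 2) * (-1/k)))
      (A • Real.exp ((∑ j, x j ^ 2) * (-1/k)) • (-1/k) •
        ∑ j, (2 * x j) • (EuclideanSpace.proj j : EuclideanSpace ℝ (Fin d) →L[ℝ] ℝ)) x := by
  exact (((sumsq_hasFDerivAt x).mul_const (-1/k)).exp).const_mul A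

lemma eval_L {d : ℕ} (x : EuclideanSpace ℝ (Fin d)) (i : Fin d) :
    (∑ j, (2 * x j) • (EuclideanSpace.proj j : EuclideanSpace ℝ (Fin d) →L[ℝ] ℝ))
      (EuclideanSpace.single i 1) = 2 * x i := by
  simp [EuclideanSpace.single_apply]

lemma pd_Phi {d : ℕ} (A k : ℝ) (i : Fin d) (x : EuclideanSpace ℝ (Fin d)) :
    pd (fun y => A * Real.exp ((∑ j, y j ^ 2) * (-1/k))) i x
      = (A * Real.exp ((∑ j, x j ^ 2) * (-1/k))) * ((-2/k) * x i) := by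
  rw [pd, (Phi_hasFDerivAt A k x).fderiv]
  simp [eval_L]
  ring

lemma pd2_Phi {d : ℕ} (A k : ℝ) (i : Fin d) (x : EuclideanSpace ℝ (Fin d)) :
    pd (fun y => pd (fun z => A * Real.exp ((∑ j, z j ^ 2) * (-1/k))) i y) i x
      = (A * Real.exp ((∑ j, x j ^ 2) * (-1/k))) * (4 * x i ^ 2 / k ^ 2 - 2 / k) := by
  have hfun : (fun y => pd (fun z : EuclideanSpace ℝ (Fin d) => A * Real.exp ((∑ j, z j ^ 2) * (-1/k))) i y)
      = fun y => (A * Real.exp ((∑ j, y j ^ 2) * (-1/k))) * ((-2/k) * y i) :=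
    funext (pd_Phi A k i)
  rw [hfun, pd]
  have hg : HasFDerivAt (fun y : EuclideanSpace ℝ (Fin d) => (-2/k) * y i)
      ((-2/k) • (EuclideanSpace.proj i : EuclideanSpace ℝ (Fin d) →L[ℝ] ℝ)) x :=
    ((EuclideanSpace.proj (𝕜 := ℝ) i).hasFDerivAt).const_mul (-2/k)
  have hmul := (Phi_hasFDerivAt A k x).fun_mul hg
  rw [hmul.fderiv]
  simp [eval_L, EuclideanSpace.single_apply]
  ring

lemma lap_Phi {d : ℕ} (A k : ℝ) (x : EuclideanSpace ℝ (Fin d)) :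
    lap (fun z : EuclideanSpace ℝ (Fin d) => A * Real.exp ((∑ j, z j ^ 2) * (-1/k))) x
      = (A * Real.exp ((∑ j, x j ^ 2) * (-1/k))) * (4 * (∑ j, x j ^ 2) / k ^ 2 - 2 * d / k) := by
  rw [lap]
  simp only [pd2_Phi]
  rw [← Finset.mul_sum]
  congr 1
  rw [Finset.sum_sub_distrib, Finset.sum_const, Finset.card_univ, Fintype.card_fin,
    ← Finset.sum_div, ← Finset.mul_sum]
  ring

lemma time_hasDerivAt (s β G t : ℝ) (ht1 : (0:ℝ) < t + 1) :
    HasDerivAt (fun τ : ℝ => (τ+1) ^ (-s) * Real.exp (-G/(4*β*(τ+1))))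
      ((t+1) ^ (-s) * Real.exp (-G/(4*β*(t+1))) * (-s/(t+1) + G/(4*β*(t+1)^2))) t := by
  have h1 : HasDerivAt (fun τ : ℝ => τ + 1) 1 t := (hasDerivAt_id t).add_const 1
  have h2 : HasDerivAt (fun τ : ℝ => (τ+1) ^ (-s)) (1 * (-s) * (t+1) ^ (-s-1)) t :=
    h1.rpow_const (Or.inl ht1.ne')
  have h3 : HasDerivAt (fun τ : ℝ => (τ+1)⁻¹) (-1 / (t+1) ^ 2) t := h1.inv ht1.ne'
  have h4 := h3.const_mul (-G/(4*β))
  have heq : ∀ τ : ℝ, -G/(4*β*(τ+1)) = (-G/(4*β)) * (τ+1)⁻¹ := fun τ => by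
    rw [← div_div, div_eq_mul_inv]
  have h5 : HasDerivAt (fun τ : ℝ => Real.exp (-G/(4*β*(τ+1))))
      (Real.exp (-G/(4*β*(t+1))) * (-G/(4*β) * (-1 / (t+1) ^ 2))) t := by
    simp only [heq]
    exact h4.exp
  have h6 := h2.fun_mul h5
  refine h6.congr_deriv ?_
  symm
  rw [Real.rpow_sub ht1, Real.rpow_one]
  by_cases hb : β = 0
  · simp [hb]
    ring
  · field_simp

lemma norm_sq_sum {d : ℕ} (y : EuclideanSpace ℝ (Fin d)) : ‖y‖ ^ 2 = ∑ j, y j ^ 2 := by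
  rw [EuclideanSpace.norm_eq, Real.sq_sqrt (by positivity)]
  simp [Real.norm_eq_abs, sq_abs]

theorem stmt_10 (d : ℕ) (s β : ℝ) (hs : 0 < s) (hβ : 0 < β)
    (F : EuclideanSpace ℝ (Fin d) → ℝ → ℝ)
    (hF : ∀ x t, F x t = (t + 1) ^ (-s) * Real.exp (-‖x‖ ^ 2 / (4 * β * (t + 1))))
    (C : ℝ) (hC : 0 < C)
    (w : EuclideanSpace ℝ (Fin d) → ℝ → ℝ) (hw : ∀ x t, w x t = C * F x t)
    (a : EuclideanSpace ℝ (Fin d) → ℝ → ℝ) (a0 : ℝ) (ha0 : 0 < a0)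
    (ha : ∀ (x : EuclideanSpace ℝ (Fin d)) (t : ℝ), a0 ≤ a x t ∧ a x t ≤ β)
    (hsd : s ≤ a0 * d / (2 * β)) :
    ∀ (x : EuclideanSpace ℝ (Fin d)), ∀ t : ℝ, 0 ≤ t →
      0 ≤ dt w x t - a x t * lap (fun y => w y t) x := by
  intro x t ht
  have hu : (0:ℝ) < t + 1 := by linarith
  have hGnn : (0:ℝ) ≤ ∑ j, x j ^ 2 := Finset.sum_nonneg fun _ _ => sq_nonneg _
  -- spatial part
  have hspace : (fun y => w y t)
      = fun y : EuclideanSpace ℝ (Fin d) =>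
          (C * (t+1) ^ (-s)) * Real.exp ((∑ j, y j ^ 2) * (-1/(4*β*(t+1)))) := by
    funext y
    rw [hw, hF, norm_sq_sum,
      show -(∑ j, y j ^ 2)/(4*β*(t+1)) = (∑ j, y j ^ 2) * (-1/(4*β*(t+1))) from by ring]
    ring
  have hlap : lap (fun y => w y t) x
      = (C * (t+1) ^ (-s)) * Real.exp ((∑ j, x j ^ 2) * (-1/(4*β*(t+1))))
        * (4 * (∑ j, x j ^ 2) / (4*β*(t+1)) ^ 2 - 2 * d / (4*β*(t+1))) := by
    rw [hspace, lap_Phi]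
  -- time part
  have htime : dt w x t
      = C * ((t+1) ^ (-s) * Real.exp ((∑ j, x j ^ 2) * (-1/(4*β*(t+1))))
        * (-s/(t+1) + (∑ j, x j ^ 2)/(4*β*(t+1) ^ 2))) := by
    have hfun : (fun τ => w x τ)
        = fun τ : ℝ => C * ((τ+1) ^ (-s) * Real.exp (-(∑ j, x j ^ 2)/(4*β*(τ+1)))) := by
      funext τ
      rw [hw, hF, norm_sq_sum]
    rw [dt, hfun, ((time_hasDerivAt s β (∑ j, x j ^ 2) t hu).const_mul C).deriv,
      show -(∑ j, x j ^ 2)/(4*β*(t+1)) = (∑ j, x j ^ 2) * (-1/(4*β*(t+1))) from by ring]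
  rw [htime, hlap]
  -- positivity and algebra
  have hE : (0:ℝ) < C * (t+1) ^ (-s) * Real.exp ((∑ j, x j ^ 2) * (-1/(4*β*(t+1)))) :=
    mul_pos (mul_pos hC (Real.rpow_pos_of_pos hu _)) (Real.exp_pos _)
  obtain ⟨ha1, ha2⟩ := ha x t
  have hd : (0:ℝ) ≤ d := Nat.cast_nonneg d
  have h2sb : s * (2*β) ≤ a0 * d := (le_div_iff₀ (by positivity)).mp hsd
  have had : a0 * d ≤ a x t * d := mul_le_mul_of_nonneg_right ha1 hd
  have key : C * ((t+1) ^ (-s) * Real.exp ((∑ j, x j ^ 2) * (-1/(4*β*(t+1))))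
        * (-s/(t+1) + (∑ j, x j ^ 2)/(4*β*(t+1) ^ 2)))
      - a x t * ((C * (t+1) ^ (-s)) * Real.exp ((∑ j, x j ^ 2) * (-1/(4*β*(t+1))))
        * (4 * (∑ j, x j ^ 2) / (4*β*(t+1)) ^ 2 - 2 * d / (4*β*(t+1))))
      = (C * (t+1) ^ (-s) * Real.exp ((∑ j, x j ^ 2) * (-1/(4*β*(t+1)))))
        * ((∑ j, x j ^ 2) * (β - a x t) / (4*β^2*(t+1)^2)
          + (a x t * d - 2*s*β) / (2*β*(t+1))) := by
    field_simp
    ring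
  rw [key]
  apply mul_nonneg hE.le
  apply add_nonneg
  · apply div_nonneg (mul_nonneg hGnn (by linarith)) (by positivity)
  · apply div_nonneg (by linarith) (by positivity)
end

section
/- (Barrier comparison) Let F_{s,β}(x,t) = (t+1)^{−s} e^{−|x|²/(4β(t+1))} with a_0 ≤ a(x,t) ≤ β and s ≤ a_0 d/(2β). Suppose v ∈ C^{2,1} is a bounded function on ℝᵈ × [0,T] with ∂v/∂t − a Δv ≤ 0, and v(x,0) ≤ F_{s,β}(x,0) for all x. Then v(x,t) ≤ F_{s,β}(x,t) for all (x,t) ∈ ℝᵈ × [0,T]. -/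
open Real Set Filter

section aux
variable {d : ℕ}


lemma hasDerivAt_line (f : EuclideanSpace ℝ (Fin d) → ℝ) (y e : EuclideanSpace ℝ (Fin d))
    (σ : ℝ) (hf : DifferentiableAt ℝ f (y + σ • e)) :
    HasDerivAt (fun σ' => f (y + σ' • e)) (fderiv ℝ f (y + σ • e) e) σ := by
  have h1 : HasDerivAt (fun σ' : ℝ => y + σ' • e) e σ := by
    simpa using ((hasDerivAt_id σ).smul_const e).const_add y
  exact hf.hasFDerivAt.comp_hasDerivAt σ h1

lemma hasDerivAt_line' (f : EuclideanSpace ℝ (Fin d) → ℝ) (y : EuclideanSpace ℝ (Fin d))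
    (i : Fin d) (σ : ℝ) (hf : DifferentiableAt ℝ f (y + σ • EuclideanSpace.single i 1)) :
    HasDerivAt (fun σ' => f (y + σ' • EuclideanSpace.single i 1))
      (pd f i (y + σ • EuclideanSpace.single i 1)) σ :=
  hasDerivAt_line f y _ σ hf

lemma pd_unique {f : EuclideanSpace ℝ (Fin d) → ℝ} {y : EuclideanSpace ℝ (Fin d)}
    {i : Fin d} {A : ℝ} (hf : DifferentiableAt ℝ f y)
    (h : HasDerivAt (fun σ' : ℝ => f (y + σ' • EuclideanSpace.single i 1)) A 0) :
    pd f i y = A := by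
  have h0 := hasDerivAt_line' f y i 0 (by simpa using hf)
  simp only [zero_smul, add_zero] at h0
  exact h0.unique h

lemma contDiff_pd {f : EuclideanSpace ℝ (Fin d) → ℝ} (hf : ContDiff ℝ 2 f) (i : Fin d) :
    ContDiff ℝ 1 (fun y => pd f i y) := by
  exact (hf.fderiv_right (m := 1) (by norm_num)).clm_apply contDiff_const

lemma pd_sub' {f g : EuclideanSpace ℝ (Fin d) → ℝ} {x : EuclideanSpace ℝ (Fin d)} (i : Fin d)
    (hf : DifferentiableAt ℝ f x) (hg : DifferentiableAt ℝ g x) :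
    pd (fun y => f y - g y) i x = pd f i x - pd g i x := by
  simp [pd, fderiv_fun_sub hf hg]

lemma pd_add' {f g : EuclideanSpace ℝ (Fin d) → ℝ} {x : EuclideanSpace ℝ (Fin d)} (i : Fin d)
    (hf : DifferentiableAt ℝ f x) (hg : DifferentiableAt ℝ g x) :
    pd (fun y => f y + g y) i x = pd f i x + pd g i x := by
  simp [pd, fderiv_fun_add hf hg]

lemma pd_const_mul' {f : EuclideanSpace ℝ (Fin d) → ℝ} {x : EuclideanSpace ℝ (Fin d)} (i : Fin d)
    (c : ℝ) (hf : DifferentiableAt ℝ f x) :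
    pd (fun y => c * f y) i x = c * pd f i x := by
  simp [pd, fderiv_const_mul hf]

lemma pd_add_const' {f : EuclideanSpace ℝ (Fin d) → ℝ} {x : EuclideanSpace ℝ (Fin d)} (i : Fin d)
    (c : ℝ) :
    pd (fun y => f y + c) i x = pd f i x := by
  simp [pd, fderiv_add_const]



noncomputable def Bsq (x : EuclideanSpace ℝ (Fin d)) : ℝ := ∑ j, x j ^ 2

lemma contDiff_Bsq {n : ℕ∞} : ContDiff ℝ n (Bsq (d := d)) := by
  have h : ∀ j : Fin d, ContDiff ℝ n (fun x : EuclideanSpace ℝ (Fin d) => x j ^ 2) := fun j =>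
    (contDiff_piLp_apply (p := 2) (i := j)).pow 2
  exact ContDiff.sum fun j _ => h j

lemma Bsq_nonneg (x : EuclideanSpace ℝ (Fin d)) : 0 ≤ Bsq x :=
  Finset.sum_nonneg fun j _ => sq_nonneg _

lemma norm_sq_eq_Bsq (x : EuclideanSpace ℝ (Fin d)) : ‖x‖ ^ 2 = Bsq x := by
  rw [EuclideanSpace.norm_eq, Real.sq_sqrt (Finset.sum_nonneg fun j _ => sq_nonneg _)]
  simp [Bsq, sq_abs]

lemma apply_add_line (x : EuclideanSpace ℝ (Fin d)) (i j : Fin d) (σ : ℝ) :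
    (x + σ • EuclideanSpace.single i 1 : EuclideanSpace ℝ (Fin d)) j
      = x j + σ * (if j = i then 1 else 0) := by
  have : (x + σ • EuclideanSpace.single i 1 : EuclideanSpace ℝ (Fin d)) j
      = x j + σ * (EuclideanSpace.single i (1:ℝ)) j := rfl
  rw [this, EuclideanSpace.single_apply]

lemma Bsq_add_line (x : EuclideanSpace ℝ (Fin d)) (i : Fin d) (σ : ℝ) :
    Bsq (x + σ • EuclideanSpace.single i 1) = Bsq x + 2 * σ * x i + σ ^ 2 := by
  unfold Bsq
  have h : ∀ j : Fin d, (x + σ • EuclideanSpace.single i 1 : EuclideanSpace ℝ (Fin d)) j ^ 2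
      = x j ^ 2 + (2 * σ * x j + σ ^ 2) * (if j = i then 1 else 0) := by
    intro j
    rw [apply_add_line]
    split <;> ring
  rw [Finset.sum_congr rfl fun j _ => h j, Finset.sum_add_distrib]
  simp only [mul_ite, mul_one, mul_zero]
  rw [Finset.sum_ite_eq' Finset.univ i (fun j => 2 * σ * x j + σ ^ 2)]
  simp only [Finset.mem_univ, if_true]
  ring

end aux

section gauss
variable {d : ℕ}

lemma contDiff_gauss {n : ℕ∞} (c D : ℝ) :
    ContDiff ℝ n (fun y : EuclideanSpace ℝ (Fin d) => c * Real.exp (-(Bsq y / D))) :=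
  contDiff_const.mul ((Real.contDiff_exp.of_le le_top).comp ((contDiff_Bsq.div_const D).neg))

lemma gauss_line_hasDerivAt (c D r m : ℝ) :
    HasDerivAt (fun σ : ℝ => c * Real.exp (-((r + 2 * σ * m + σ ^ 2) / D)))
      (c * Real.exp (-(r / D)) * (-(2 * m / D))) 0 := by
  have H := (((((((hasDerivAt_id (0:ℝ)).const_mul 2).mul_const m).const_add r).add
    (hasDerivAt_pow 2 (0:ℝ))).div_const D).neg).exp.const_mul c
  refine H.congr_deriv ?_
  norm_num
  try ring

lemma pd_gauss (c D : ℝ) (i : Fin d) (x : EuclideanSpace ℝ (Fin d)) :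
    pd (fun y => c * Real.exp (-(Bsq y / D))) i x
      = c * Real.exp (-(Bsq x / D)) * (-(2 * x i / D)) := by
  apply pd_unique (((contDiff_gauss (n := 1) c D).differentiable (by norm_num)) x)
  have hline : (fun σ' : ℝ => c * Real.exp (-(Bsq (x + σ' • EuclideanSpace.single i 1) / D)))
      = fun σ' : ℝ => c * Real.exp (-((Bsq x + 2 * σ' * x i + σ' ^ 2) / D)) := by
    funext σ'; rw [Bsq_add_line]
  rw [hline]
  exact gauss_line_hasDerivAt c D (Bsq x) (x i)

lemma diff_gauss_lin (c D : ℝ) (i : Fin d) :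
    Differentiable ℝ (fun y : EuclideanSpace ℝ (Fin d)
      => c * Real.exp (-(Bsq y / D)) * (-(2 * y i / D))) := by
  apply Differentiable.mul ((contDiff_gauss (n := 1) c D).differentiable (by norm_num))
  have h1 : Differentiable ℝ (fun y : EuclideanSpace ℝ (Fin d) => y i) :=
    (contDiff_piLp_apply (p := 2) (i := i) (n := 1)).differentiable (by norm_num)
  have hout : Differentiable ℝ (fun u : ℝ => -(2 * u / D)) := by
    simpa using (((differentiable_id).const_mul (2:ℝ)).div_const D).neg
  exact hout.comp h1

lemma pd_gauss2 (c D : ℝ) (i : Fin d) (x : EuclideanSpace ℝ (Fin d)) :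
    pd (fun y => c * Real.exp (-(Bsq y / D)) * (-(2 * y i / D))) i x
      = c * Real.exp (-(Bsq x / D)) * (4 * (x i) ^ 2 / D ^ 2 - 2 / D) := by
  apply pd_unique (show DifferentiableAt ℝ (fun y : EuclideanSpace ℝ (Fin d)
    => c * Real.exp (-(Bsq y / D)) * (-(2 * y i / D))) x from diff_gauss_lin c D i x)
  have hline : (fun σ' : ℝ => (fun y : EuclideanSpace ℝ (Fin d) =>
        c * Real.exp (-(Bsq y / D)) * (-(2 * y i / D))) (x + σ' • EuclideanSpace.single i 1))
      = fun σ' : ℝ => c * Real.exp (-((Bsq x + 2 * σ' * x i + σ' ^ 2) / D))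
          * (-(2 * (x i + σ') / D)) := by
    funext σ'
    simp only [Bsq_add_line, apply_add_line]
    norm_num
  rw [hline]
  have H2 : HasDerivAt (fun σ : ℝ => -(2 * (x i + σ) / D)) (-(2 / D)) 0 := by
    have := ((((hasDerivAt_id (0:ℝ)).const_add (x i)).const_mul 2).div_const D).neg
    refine this.congr_deriv ?_
    norm_num
  have H := (gauss_line_hasDerivAt c D (Bsq x) (x i)).mul H2
  refine H.congr_deriv ?_
  norm_num
  ring

lemma pd_Bsq (i : Fin d) (x : EuclideanSpace ℝ (Fin d)) : pd Bsq i x = 2 * x i := by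
  apply pd_unique ((contDiff_Bsq (n := 1)).differentiable (by norm_num) x)
  have hline : (fun σ' : ℝ => Bsq (x + σ' • EuclideanSpace.single i 1))
      = fun σ' : ℝ => Bsq x + 2 * σ' * x i + σ' ^ 2 := by
    funext σ'; rw [Bsq_add_line]
  rw [hline]
  have H := ((((hasDerivAt_id (0:ℝ)).const_mul 2).mul_const (x i)).const_add (Bsq x)).add
    (hasDerivAt_pow 2 (0:ℝ))
  refine H.congr_deriv ?_
  norm_num

lemma lap_Bsq (x : EuclideanSpace ℝ (Fin d)) : lap Bsq x = 2 * d := by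
  unfold lap
  have h : ∀ i : Fin d, pd (fun y => pd Bsq i y) i x = 2 := by
    intro i
    have hfun : (fun y => pd Bsq i y) = fun y : EuclideanSpace ℝ (Fin d) => 2 * y i :=
      funext fun y => pd_Bsq i y
    rw [hfun]
    have h1 : Differentiable ℝ (fun y : EuclideanSpace ℝ (Fin d) => y i) :=
      (contDiff_piLp_apply (p := 2) (i := i) (n := 1)).differentiable (by norm_num)
    have hout : Differentiable ℝ (fun u : ℝ => 2 * u) := by
      simpa using (differentiable_id (𝕜 := ℝ)).const_mul (2:ℝ)
    apply pd_unique (show DifferentiableAt ℝ (fun y : EuclideanSpace ℝ (Fin d) => 2 * y i) x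
      from (hout.comp h1) x)
    have hline : (fun σ' : ℝ => (fun y : EuclideanSpace ℝ (Fin d) => 2 * y i)
        (x + σ' • EuclideanSpace.single i 1)) = fun σ' : ℝ => 2 * (x i + σ') := by
      funext σ'
      simp only [apply_add_line]
      norm_num
    rw [hline]
    have := ((hasDerivAt_id (0:ℝ)).const_add (x i)).const_mul 2
    refine this.congr_deriv ?_
    norm_num
  rw [Finset.sum_congr rfl fun i _ => h i]
  simp [mul_comm]

lemma lap_gauss (c D : ℝ) (x : EuclideanSpace ℝ (Fin d)) :
    lap (fun y => c * Real.exp (-(Bsq y / D))) x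
      = c * Real.exp (-(Bsq x / D)) * (4 * Bsq x / D ^ 2 - 2 * d / D) := by
  unfold lap
  have h : ∀ i : Fin d, pd (fun y => pd (fun z => c * Real.exp (-(Bsq z / D))) i y) i x
      = c * Real.exp (-(Bsq x / D)) * (4 * (x i) ^ 2 / D ^ 2 - 2 / D) := by
    intro i
    have hfun : (fun y => pd (fun z => c * Real.exp (-(Bsq z / D))) i y)
        = fun y : EuclideanSpace ℝ (Fin d)
          => c * Real.exp (-(Bsq y / D)) * (-(2 * y i / D)) :=
      funext fun y => pd_gauss c D i y
    rw [hfun, pd_gauss2]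
  rw [Finset.sum_congr rfl fun i _ => h i, ← Finset.mul_sum]
  congr 1
  calc ∑ i : Fin d, (4 * x i ^ 2 / D ^ 2 - 2 / D)
      = (∑ i : Fin d, 4 * x i ^ 2 / D ^ 2) - (d : ℝ) * (2 / D) := by
        rw [Finset.sum_sub_distrib, Finset.sum_const, Finset.card_univ, Fintype.card_fin,
          nsmul_eq_mul]
    _ = 4 * Bsq x / D ^ 2 - 2 * d / D := by
        unfold Bsq
        rw [← Finset.sum_div, ← Finset.mul_sum]
        ring

end gauss

section oned

lemma deriv_nonneg_of_max_left {g : ℝ → ℝ} {L τ : ℝ} (hτ : 0 < τ)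
    (hg : HasDerivAt g L τ) (hm : ∀ t ∈ Set.Icc 0 τ, g t ≤ g τ) : 0 ≤ L := by
  have h := hasDerivAt_iff_tendsto_slope.1 hg
  have h' : Filter.Tendsto (slope g τ) (nhdsWithin τ (Set.Iio τ)) (nhds L) :=
    h.mono_left (nhdsWithin_mono τ (fun x hx => ne_of_lt hx))
  refine ge_of_tendsto h' ?_
  filter_upwards [Ioo_mem_nhdsLT_of_mem (show τ ∈ Set.Ioc 0 τ from ⟨hτ, le_rfl⟩)] with t ht
  have h1 : g t - g τ ≤ 0 := sub_nonpos.2 (hm t ⟨le_of_lt ht.1, le_of_lt ht.2⟩)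
  have h2 : t - τ < 0 := sub_neg.2 ht.2
  rw [slope_def_field]
  exact div_nonneg_of_nonpos (by simpa [slope] using h1) (le_of_lt h2)

lemma second_deriv_nonpos_of_max {h h' : ℝ → ℝ} {A : ℝ}
    (hd : ∀ σ, HasDerivAt h (h' σ) σ) (h2 : HasDerivAt h' A 0)
    (hm : ∀ σ, h σ ≤ h 0) : A ≤ 0 := by
  by_contra hA
  push_neg at hA
  have h'0 : h' 0 = 0 := by
    have hloc : IsLocalMax h 0 := Filter.Eventually.of_forall hm
    exact hloc.hasDerivAt_eq_zero (hd 0)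
  have hslope := hasDerivAt_iff_tendsto_slope.1 h2
  have h3 : Filter.Tendsto (slope h' 0) (nhdsWithin 0 (Set.Ioi 0)) (nhds A) :=
    hslope.mono_left (nhdsWithin_mono 0 (fun x hx => ne_of_gt hx))
  have h4 : ∀ᶠ σ in nhdsWithin 0 (Set.Ioi 0), 0 < slope h' 0 σ :=
    h3.eventually (eventually_gt_nhds hA)
  have hev : ∀ᶠ σ in nhdsWithin 0 (Set.Ioi 0), 0 < h' σ := by
    filter_upwards [h4, self_mem_nhdsWithin] with σ hσ hσpos
    have hσpos' : (0:ℝ) < σ := hσpos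
    have heq : slope h' 0 σ = h' σ / σ := by
      rw [slope_def_field, h'0]
      simp
    rw [heq] at hσ
    have := mul_pos hσ hσpos'
    rwa [div_mul_cancel₀ _ (ne_of_gt hσpos')] at this
  obtain ⟨δ, hδ, hsub⟩ := mem_nhdsGT_iff_exists_Ioo_subset.1 hev
  have hδpos : (0:ℝ) < δ := hδ
  have hcont : Continuous h := by
    rw [continuous_iff_continuousAt]
    exact fun σ => (hd σ).differentiableAt.continuousAt
  have hmono : StrictMonoOn h (Set.Icc 0 δ) := by
    apply strictMonoOn_of_deriv_pos (convex_Icc _ _) hcont.continuousOn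
    intro σ hσ
    rw [interior_Icc] at hσ
    rw [(hd σ).deriv]
    exact hsub ⟨hσ.1, hσ.2⟩
  have hlt : h 0 < h (δ/2) := by
    apply hmono ⟨le_rfl, le_of_lt hδpos⟩ ⟨le_of_lt (by linarith), by linarith⟩
    linarith
  exact absurd (hm (δ/2)) (not_le.2 hlt)

end oned

section timeder

lemma hasDerivAt_Ffun (s β r τ : ℝ) (hτ : 0 < τ + 1) :
    HasDerivAt (fun t : ℝ => (t + 1) ^ (-s) * Real.exp (-(r / (4 * β * (t + 1)))))
      ((τ + 1) ^ (-s) * Real.exp (-(r / (4 * β * (τ + 1))))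
        * (-(s / (τ + 1)) + r / (4 * β * (τ + 1) ^ 2))) τ := by
  have hne : τ + 1 ≠ 0 := ne_of_gt hτ
  have hinner : HasDerivAt (fun t : ℝ => t + 1) 1 τ := (hasDerivAt_id τ).add_const 1
  have h1 : HasDerivAt (fun t : ℝ => (t + 1) ^ (-s)) (-s * (τ + 1) ^ (-s - 1) * 1) τ :=
    by have := (Real.hasDerivAt_rpow_const (p := -s) (Or.inl hne)).comp τ hinner; exact this
  have hinv : HasDerivAt (fun t : ℝ => (t + 1)⁻¹) (-((τ + 1) ^ 2)⁻¹ * 1) τ :=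
    (hasDerivAt_inv hne).comp τ hinner
  have hfun : (fun t : ℝ => -(r / (4 * β * (t + 1))))
      = fun t : ℝ => -(r / (4 * β) * (t + 1)⁻¹) := by
    funext t
    rw [← div_div, div_eq_mul_inv]
  have h2inner : HasDerivAt (fun t : ℝ => -(r / (4 * β * (t + 1))))
      (r / (4 * β) * ((τ + 1) ^ 2)⁻¹) τ := by
    rw [hfun]
    have := (hinv.const_mul (r / (4 * β))).neg
    refine this.congr_deriv ?_
    ring
  have h2 : HasDerivAt (fun t : ℝ => Real.exp (-(r / (4 * β * (t + 1)))))
      (Real.exp (-(r / (4 * β * (τ + 1)))) * (r / (4 * β) * ((τ + 1) ^ 2)⁻¹)) τ :=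
    h2inner.exp
  have H := h1.mul h2
  refine H.congr_deriv ?_
  rw [Real.rpow_sub hτ, Real.rpow_one]
  field_simp

end timeder

section lapdecomp
variable {d : ℕ}

lemma lap_sub {f g : EuclideanSpace ℝ (Fin d) → ℝ} (hf : ContDiff ℝ 2 f)
    (hg : ContDiff ℝ 2 g) (x : EuclideanSpace ℝ (Fin d)) :
    lap (fun z => f z - g z) x = lap f x - lap g x := by
  unfold lap
  rw [← Finset.sum_sub_distrib]
  apply Finset.sum_congr rfl
  intro i _
  have hfun : (fun z => pd (fun w => f w - g w) i z)
      = fun z => pd f i z - pd g i z := funext fun z =>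
    pd_sub' i (hf.differentiable (by norm_num) z) (hg.differentiable (by norm_num) z)
  rw [hfun]
  exact pd_sub' i ((contDiff_pd hf i).differentiable (by norm_num) x)
    ((contDiff_pd hg i).differentiable (by norm_num) x)

lemma lap_add {f g : EuclideanSpace ℝ (Fin d) → ℝ} (hf : ContDiff ℝ 2 f)
    (hg : ContDiff ℝ 2 g) (x : EuclideanSpace ℝ (Fin d)) :
    lap (fun z => f z + g z) x = lap f x + lap g x := by
  unfold lap
  rw [← Finset.sum_add_distrib]
  apply Finset.sum_congr rfl
  intro i _
  have hfun : (fun z => pd (fun w => f w + g w) i z)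
      = fun z => pd f i z + pd g i z := funext fun z =>
    pd_add' i (hf.differentiable (by norm_num) z) (hg.differentiable (by norm_num) z)
  rw [hfun]
  exact pd_add' i ((contDiff_pd hf i).differentiable (by norm_num) x)
    ((contDiff_pd hg i).differentiable (by norm_num) x)

lemma lap_const_mul {f : EuclideanSpace ℝ (Fin d) → ℝ} (hf : ContDiff ℝ 2 f) (c : ℝ)
    (x : EuclideanSpace ℝ (Fin d)) :
    lap (fun z => c * f z) x = c * lap f x := by
  unfold lap
  rw [Finset.mul_sum]
  apply Finset.sum_congr rfl
  intro i _
  have hfun : (fun z => pd (fun w => c * f w) i z)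
      = fun z => c * pd f i z := funext fun z =>
    pd_const_mul' i c (hf.differentiable (by norm_num) z)
  rw [hfun]
  exact pd_const_mul' i c ((contDiff_pd hf i).differentiable (by norm_num) x)

lemma lap_add_const {f : EuclideanSpace ℝ (Fin d) → ℝ} (c : ℝ)
    (x : EuclideanSpace ℝ (Fin d)) :
    lap (fun z => f z + c) x = lap f x := by
  unfold lap
  apply Finset.sum_congr rfl
  intro i _
  have hfun : (fun z => pd (fun w => f w + c) i z)
      = fun z => pd f i z := funext fun z => pd_add_const' i c
  rw [hfun]

end lapdecomp

lemma step5 (s β a0 aτ dd u r : ℝ) (hβ : 0 < β) (hu : 1 ≤ u) (hr : 0 ≤ r)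
    (ha1 : a0 ≤ aτ) (ha2 : aτ ≤ β) (hd : 1 ≤ dd)
    (hsd : s ≤ a0 * dd / (2 * β)) :
    0 ≤ (-(s / u) + r / (4 * β * u ^ 2))
      - aτ * (4 * r / (4 * β * u) ^ 2 - 2 * dd / (4 * β * u)) := by
  have hupos : 0 < u := by linarith
  have h2sβ : s * (2 * β) ≤ a0 * dd := (le_div_iff₀ (by positivity)).1 hsd
  have had : a0 * dd ≤ aτ * dd := by nlinarith
  have hY : 0 ≤ 2 * β * u * (aτ * dd - 2 * s * β) + r * (β - aτ) := by
    have e1 : 0 ≤ aτ * dd - 2 * s * β := by linarith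
    have e2 : (0:ℝ) ≤ 2 * β * u := by positivity
    exact add_nonneg (mul_nonneg e2 e1) (mul_nonneg hr (by linarith))
  have heq : (-(s / u) + r / (4 * β * u ^ 2))
      - aτ * (4 * r / (4 * β * u) ^ 2 - 2 * dd / (4 * β * u))
      = (2 * β * u * (aτ * dd - 2 * s * β) + r * (β - aτ)) / (4 * β ^ 2 * u ^ 2) := by
    field_simp
    ring
  rw [heq]
  exact div_nonneg hY (by positivity)

set_option maxHeartbeats 1000000 in
lemma analytic_core {d : ℕ} (T : ℝ) (s β : ℝ) (hs : 0 < s) (hβ : 0 < β)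
    (F : EuclideanSpace ℝ (Fin d) → ℝ → ℝ)
    (hF : ∀ x t, F x t = (t + 1) ^ (-s) * Real.exp (-‖x‖ ^ 2 / (4 * β * (t + 1))))
    (a : EuclideanSpace ℝ (Fin d) → ℝ → ℝ) (a0 : ℝ) (ha0 : 0 < a0)
    (ha : ∀ (x : EuclideanSpace ℝ (Fin d)) (t : ℝ), a0 ≤ a x t ∧ a x t ≤ β)
    (hsd : s ≤ a0 * d / (2 * β))
    (v : EuclideanSpace ℝ (Fin d) → ℝ → ℝ)
    (hx2 : ∀ t ∈ Set.Icc 0 T, ContDiff ℝ 2 (fun y => v y t))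
    (ht1 : ∀ (x : EuclideanSpace ℝ (Fin d)), ∀ t ∈ Set.Icc 0 T,
      DifferentiableAt ℝ (fun s' => v x s') t)
    (hL : ∀ (x : EuclideanSpace ℝ (Fin d)), ∀ t ∈ Set.Icc 0 T,
      dt v x t - a x t * lap (fun y => v y t) x ≤ 0)
    (ε : ℝ) (hε : 0 < ε) (hdpos : 0 < d)
    (y : EuclideanSpace ℝ (Fin d)) (τ : ℝ) (hτmem : τ ∈ Set.Icc 0 T) (hτpos : 0 < τ)
    (hglob : ∀ (x' : EuclideanSpace ℝ (Fin d)), ∀ t' ∈ Set.Icc 0 T,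
      v x' t' - F x' t' - ε * (‖x'‖ ^ 2 + (2 * d * β + 1) * t')
        ≤ v y τ - F y τ - ε * (‖y‖ ^ 2 + (2 * d * β + 1) * τ)) : False := by
  have hupos : (0:ℝ) < τ + 1 := by linarith
  have hu1 : (1:ℝ) ≤ τ + 1 := by linarith [hτmem.1]
  -- time derivative part
  have hvy : HasDerivAt (fun t' => v y t') (dt v y τ) τ := (ht1 y τ hτmem).hasDerivAt
  have hFyfun : (fun t' : ℝ => F y t')
      = fun t' : ℝ => (t' + 1) ^ (-s) * Real.exp (-(‖y‖ ^ 2 / (4 * β * (t' + 1)))) := by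
    funext t'
    rw [hF, neg_div]
  have hFy : HasDerivAt (fun t' => F y t')
      ((τ + 1) ^ (-s) * Real.exp (-(‖y‖ ^ 2 / (4 * β * (τ + 1))))
        * (-(s / (τ + 1)) + ‖y‖ ^ 2 / (4 * β * (τ + 1) ^ 2))) τ := by
    rw [hFyfun]
    exact hasDerivAt_Ffun s β (‖y‖ ^ 2) τ hupos
  have hlin : HasDerivAt (fun t' : ℝ => ε * (‖y‖ ^ 2 + (2 * d * β + 1) * t'))
      (ε * ((2 * d * β + 1) * 1)) τ :=
    (((hasDerivAt_id τ).const_mul (2 * d * β + 1)).const_add (‖y‖ ^ 2)).const_mul ε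
  have hgW := (hvy.sub hFy).sub hlin
  have h1 : 0 ≤ dt v y τ
      - (τ + 1) ^ (-s) * Real.exp (-(‖y‖ ^ 2 / (4 * β * (τ + 1))))
        * (-(s / (τ + 1)) + ‖y‖ ^ 2 / (4 * β * (τ + 1) ^ 2))
      - ε * ((2 * d * β + 1) * 1) := by
    apply deriv_nonneg_of_max_left hτpos hgW
    intro t' ht'
    exact hglob y t' ⟨ht'.1, le_trans ht'.2 hτmem.2⟩
  -- spatial part
  have hWexp_eq : ∀ x' : EuclideanSpace ℝ (Fin d),
      v x' τ - F x' τ - ε * (‖x'‖ ^ 2 + (2 * d * β + 1) * τ)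
      = v x' τ - ((τ + 1) ^ (-s) * Real.exp (-(Bsq x' / (4 * β * (τ + 1))))
          + ε * (Bsq x' + (2 * d * β + 1) * τ)) := by
    intro x'
    rw [hF, ← norm_sq_eq_Bsq, neg_div]
    ring
  set Wexp : EuclideanSpace ℝ (Fin d) → ℝ := fun x' =>
    v x' τ - ((τ + 1) ^ (-s) * Real.exp (-(Bsq x' / (4 * β * (τ + 1))))
      + ε * (Bsq x' + (2 * d * β + 1) * τ)) with hWexpdef
  have hg2 : ContDiff ℝ 2 (fun z : EuclideanSpace ℝ (Fin d) =>
      (τ + 1) ^ (-s) * Real.exp (-(Bsq z / (4 * β * (τ + 1))))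
        + ε * (Bsq z + (2 * d * β + 1) * τ)) :=
    (contDiff_gauss _ _).add (contDiff_const.mul (contDiff_Bsq.add contDiff_const))
  have hcd2 : ContDiff ℝ 2 Wexp := (hx2 τ hτmem).sub hg2
  have hWd : Differentiable ℝ Wexp := hcd2.differentiable (by norm_num)
  have hmax : ∀ x' : EuclideanSpace ℝ (Fin d), Wexp x' ≤ Wexp y := by
    intro x'
    rw [hWexpdef]
    simp only
    rw [← hWexp_eq x', ← hWexp_eq y]
    exact hglob x' τ hτmem
  have hsum : ∀ i : Fin d, pd (fun z => pd Wexp i z) i y ≤ 0 := by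
    intro i
    have hpdD : Differentiable ℝ (fun z => pd Wexp i z) :=
      (contDiff_pd hcd2 i).differentiable (by norm_num)
    have hli : ∀ σ : ℝ, HasDerivAt (fun σ' => Wexp (y + σ' • EuclideanSpace.single i 1))
        (pd Wexp i (y + σ • EuclideanSpace.single i 1)) σ :=
      fun σ => hasDerivAt_line' Wexp y i σ (hWd _)
    have hli2 : HasDerivAt (fun σ : ℝ => pd Wexp i (y + σ • EuclideanSpace.single i 1))
        (pd (fun z => pd Wexp i z) i y) 0 := by
      have h := hasDerivAt_line' (fun z => pd Wexp i z) y i 0 (hpdD _)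
      simpa using h
    exact second_deriv_nonpos_of_max hli hli2 (fun σ => by
      have h := hmax (y + σ • EuclideanSpace.single i 1)
      simpa using h)
  have hlapW : lap Wexp y ≤ 0 := Finset.sum_nonpos (fun i _ => hsum i)
  -- decompose laplacian
  have hdec : lap Wexp y = lap (fun z => v z τ) y
      - ((τ + 1) ^ (-s) * Real.exp (-(Bsq y / (4 * β * (τ + 1))))
          * (4 * Bsq y / (4 * β * (τ + 1)) ^ 2 - 2 * d / (4 * β * (τ + 1)))
        + ε * (2 * d)) := by
    rw [hWexpdef]
    rw [lap_sub (hx2 τ hτmem) hg2 y]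
    congr 1
    rw [lap_add (contDiff_gauss _ _) (contDiff_const.mul (contDiff_Bsq.add contDiff_const)) y]
    rw [lap_gauss]
    congr 1
    rw [lap_const_mul (contDiff_Bsq.add contDiff_const) ε y]
    congr 1
    rw [lap_add_const]
    exact lap_Bsq y
  -- combine everything
  obtain ⟨ha1, ha2⟩ := ha y τ
  have haτpos : 0 < a y τ := lt_of_lt_of_le ha0 ha1
  have hbr := step5 s β a0 (a y τ) d (τ + 1) (Bsq y) hβ hu1 (Bsq_nonneg y) ha1 ha2
    (by exact_mod_cast Nat.one_le_cast.2 hdpos) hsd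
  have hP : (0:ℝ) ≤ (τ + 1) ^ (-s) * Real.exp (-(Bsq y / (4 * β * (τ + 1)))) :=
    mul_nonneg (Real.rpow_nonneg (by linarith) _) (Real.exp_nonneg _)
  have h4 : 0 ≤ (τ + 1) ^ (-s) * Real.exp (-(Bsq y / (4 * β * (τ + 1))))
        * (-(s / (τ + 1)) + Bsq y / (4 * β * (τ + 1) ^ 2))
      - a y τ * ((τ + 1) ^ (-s) * Real.exp (-(Bsq y / (4 * β * (τ + 1))))
          * (4 * Bsq y / (4 * β * (τ + 1)) ^ 2 - 2 * d / (4 * β * (τ + 1)))) := by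
    have heq : (τ + 1) ^ (-s) * Real.exp (-(Bsq y / (4 * β * (τ + 1))))
        * (-(s / (τ + 1)) + Bsq y / (4 * β * (τ + 1) ^ 2))
      - a y τ * ((τ + 1) ^ (-s) * Real.exp (-(Bsq y / (4 * β * (τ + 1))))
          * (4 * Bsq y / (4 * β * (τ + 1)) ^ 2 - 2 * d / (4 * β * (τ + 1))))
      = ((τ + 1) ^ (-s) * Real.exp (-(Bsq y / (4 * β * (τ + 1)))))
        * ((-(s / (τ + 1)) + Bsq y / (4 * β * (τ + 1) ^ 2))
          - a y τ * (4 * Bsq y / (4 * β * (τ + 1)) ^ 2 - 2 * d / (4 * β * (τ + 1)))) := by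
      ring
    rw [heq]
    exact mul_nonneg hP hbr
  have hLy := hL y τ hτmem
  have hlap' : lap (fun z => v z τ) y
      ≤ (τ + 1) ^ (-s) * Real.exp (-(Bsq y / (4 * β * (τ + 1))))
          * (4 * Bsq y / (4 * β * (τ + 1)) ^ 2 - 2 * d / (4 * β * (τ + 1)))
        + ε * (2 * d) := by linarith [hlapW, hdec.symm.le, hdec.le]
  -- rewrite h1 in terms of Bsq
  rw [norm_sq_eq_Bsq] at h1
  have haux1 : a y τ * lap (fun z => v z τ) y
      ≤ a y τ * ((τ + 1) ^ (-s) * Real.exp (-(Bsq y / (4 * β * (τ + 1))))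
          * (4 * Bsq y / (4 * β * (τ + 1)) ^ 2 - 2 * d / (4 * β * (τ + 1))))
        + a y τ * (ε * (2 * d)) := by nlinarith [mul_le_mul_of_nonneg_left hlap' haτpos.le]
  have haux2 : a y τ * (ε * (2 * d)) ≤ β * (ε * (2 * d)) := by
    apply mul_le_mul_of_nonneg_right ha2
    positivity
  linarith [h1, hLy, h4, haux1, haux2, hε]

set_option maxHeartbeats 1000000 in
theorem stmt_11 (d : ℕ) (T : ℝ) (hT : 0 < T)
    (s β : ℝ) (hs : 0 < s) (hβ : 0 < β)
    (F : EuclideanSpace ℝ (Fin d) → ℝ → ℝ)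
    (hF : ∀ x t, F x t = (t + 1) ^ (-s) * Real.exp (-‖x‖ ^ 2 / (4 * β * (t + 1))))
    (a : EuclideanSpace ℝ (Fin d) → ℝ → ℝ) (a0 : ℝ) (ha0 : 0 < a0)
    (ha : ∀ (x : EuclideanSpace ℝ (Fin d)) (t : ℝ), a0 ≤ a x t ∧ a x t ≤ β)
    (hsd : s ≤ a0 * d / (2 * β))
    (v : EuclideanSpace ℝ (Fin d) → ℝ → ℝ)
    (hcont : Continuous (fun p : EuclideanSpace ℝ (Fin d) × ℝ => v p.1 p.2))
    (hx2 : ∀ t ∈ Set.Icc 0 T, ContDiff ℝ 2 (fun y => v y t))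
    (ht1 : ∀ (x : EuclideanSpace ℝ (Fin d)), ∀ t ∈ Set.Icc 0 T,
      DifferentiableAt ℝ (fun s' => v x s') t)
    (Mv : ℝ) (hbdd : ∀ (x : EuclideanSpace ℝ (Fin d)), ∀ t ∈ Set.Icc 0 T, |v x t| ≤ Mv)
    (hL : ∀ (x : EuclideanSpace ℝ (Fin d)), ∀ t ∈ Set.Icc 0 T,
      dt v x t - a x t * lap (fun y => v y t) x ≤ 0)
    (hinit : ∀ x : EuclideanSpace ℝ (Fin d), v x 0 ≤ F x 0) :
    ∀ (x : EuclideanSpace ℝ (Fin d)), ∀ t ∈ Set.Icc 0 T, v x t ≤ F x t := by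
  rcases Nat.eq_zero_or_pos d with hd0 | hdpos
  · subst hd0
    exfalso
    norm_num at hsd
    linarith
  intro x t ht
  have hMv0 : 0 ≤ Mv := le_trans (abs_nonneg _) (hbdd x 0 ⟨le_rfl, le_of_lt hT⟩)
  have hCpos : (0:ℝ) < 2 * d * β + 1 := by positivity
  set C : ℝ := 2 * d * β + 1 with hC
  have hFnn : ∀ (x' : EuclideanSpace ℝ (Fin d)) (t' : ℝ), 0 ≤ t' → 0 ≤ F x' t' := by
    intro x' t' h'
    rw [hF]
    exact mul_nonneg (Real.rpow_nonneg (by linarith) _) (Real.exp_nonneg _)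
  have key : ∀ ε : ℝ, 0 < ε → ∀ x' : EuclideanSpace ℝ (Fin d), ∀ t' ∈ Set.Icc 0 T,
      v x' t' - F x' t' - ε * (‖x'‖ ^ 2 + C * t') ≤ 0 := by
    intro ε hε
    by_contra hcon
    push_neg at hcon
    obtain ⟨x₀, t₀, ht₀, hW₀⟩ := hcon
    set W : EuclideanSpace ℝ (Fin d) → ℝ → ℝ :=
      fun x' t' => v x' t' - F x' t' - ε * (‖x'‖ ^ 2 + C * t') with hWdef
    have hW₀' : 0 < W x₀ t₀ := hW₀
    set R : ℝ := Real.sqrt (Mv / ε) + 1 with hR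
    have hout : ∀ (x' : EuclideanSpace ℝ (Fin d)), ∀ t' ∈ Set.Icc 0 T, R ≤ ‖x'‖ →
        W x' t' ≤ 0 := by
      intro x' t' ht' hRx
      have h1 : v x' t' ≤ Mv := le_trans (le_abs_self _) (hbdd x' t' ht')
      have h2 : 0 ≤ F x' t' := hFnn x' t' ht'.1
      have hs0 : Real.sqrt (Mv / ε) ^ 2 = Mv / ε := Real.sq_sqrt (by positivity)
      rw [hR] at hRx
      have h3 : Mv / ε < ‖x'‖ ^ 2 := by
        have hp : (Real.sqrt (Mv / ε) + 1) ^ 2 ≤ ‖x'‖ ^ 2 :=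
          pow_le_pow_left₀ (by positivity) hRx 2
        nlinarith [Real.sqrt_nonneg (Mv / ε)]
      have h4 : Mv < ε * ‖x'‖ ^ 2 := by
        rw [div_lt_iff₀ hε] at h3
        linarith
      have h5 : 0 ≤ ε * (C * t') := mul_nonneg hε.le (mul_nonneg hCpos.le ht'.1)
      simp only [hWdef]
      nlinarith
    set K : Set (EuclideanSpace ℝ (Fin d) × ℝ) :=
      Metric.closedBall 0 R ×ˢ Set.Icc 0 T with hK
    have hKc : IsCompact K := (isCompact_closedBall 0 R).prod isCompact_Icc
    have hx₀K : (x₀, t₀) ∈ K := by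
      refine Set.mem_prod.2 ⟨mem_closedBall_zero_iff.2 ?_, ht₀⟩
      by_contra hcon2
      push_neg at hcon2
      exact absurd (hout x₀ t₀ ht₀ hcon2.le) (not_le.2 hW₀')
    have hWcont : ContinuousOn (fun p : EuclideanSpace ℝ (Fin d) × ℝ => W p.1 p.2) K := by
      simp only [hWdef]
      apply ContinuousOn.sub
      apply ContinuousOn.sub hcont.continuousOn
      · -- continuity of F on K
        have hFeq : ∀ p : EuclideanSpace ℝ (Fin d) × ℝ, F p.1 p.2
            = (p.2 + 1) ^ (-s) * Real.exp (-‖p.1‖ ^ 2 / (4 * β * (p.2 + 1))) := fun p => hF _ _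
        rw [show (fun p : EuclideanSpace ℝ (Fin d) × ℝ => F p.1 p.2)
            = fun p : EuclideanSpace ℝ (Fin d) × ℝ =>
              (p.2 + 1) ^ (-s) * Real.exp (-‖p.1‖ ^ 2 / (4 * β * (p.2 + 1))) from funext hFeq]
        apply ContinuousOn.mul
        · apply ContinuousOn.rpow_const (by fun_prop)
          intro p hp
          left
          have : (0:ℝ) ≤ p.2 := hp.2.1
          intro hcc
          linarith
        · apply Real.continuous_exp.comp_continuousOn
          apply ContinuousOn.div (by fun_prop) (by fun_prop)
          intro p hp
          have : (0:ℝ) ≤ p.2 := hp.2.1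
          positivity
      · fun_prop
    obtain ⟨q, hqK, hqmax⟩ := hKc.exists_isMaxOn ⟨(x₀, t₀), hx₀K⟩ hWcont
    obtain ⟨y, τ⟩ := q
    have hqmax' : ∀ p ∈ K, W p.1 p.2 ≤ W y τ := fun p hp => hqmax hp
    have hτmem : τ ∈ Set.Icc 0 T := hqK.2
    have hWyτ2 : 0 < W y τ := lt_of_lt_of_le hW₀' (hqmax' (x₀, t₀) hx₀K)
    have hglob : ∀ (x' : EuclideanSpace ℝ (Fin d)), ∀ t' ∈ Set.Icc 0 T, W x' t' ≤ W y τ := by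
      intro x' t' ht'
      rcases le_or_gt ‖x'‖ R with hcase | hcase
      · have hmem : (x', t') ∈ K := ⟨mem_closedBall_zero_iff.2 hcase, ht'⟩
        exact hqmax' (x', t') hmem
      · exact le_trans (hout x' t' ht' hcase.le) hWyτ2.le
    have hτpos : 0 < τ := by
      rcases hτmem.1.lt_or_eq with hcase | hcase
      · exact hcase
      · exfalso
        have hW0 : W y 0 ≤ 0 := by
          have h1 := hinit y
          have h2 : 0 ≤ ε * (‖y‖ ^ 2 + C * 0) := by positivity
          simp only [hWdef]
          linarith
        rw [← hcase] at hWyτ2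
        linarith
    apply analytic_core T s β hs hβ F hF a a0 ha0 ha hsd v hx2 ht1 hL ε hε hdpos
      y τ hτmem hτpos
    intro x' t' ht'
    have hgg := hglob x' t' ht'
    simp only [hWdef, hC] at hgg ⊢
    exact hgg
  have hK0 : 0 ≤ ‖x‖ ^ 2 + C * t := by
    have := ht.1
    positivity
  refine le_of_forall_pos_le_add fun δ hδ => ?_
  have hεpos : 0 < δ / (‖x‖ ^ 2 + C * t + 1) := by positivity
  have h := key _ hεpos x t ht
  have h2 : δ / (‖x‖ ^ 2 + C * t + 1) * (‖x‖ ^ 2 + C * t) ≤ δ := by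
    rw [div_mul_eq_mul_div, div_le_iff₀ (by linarith)]
    nlinarith
  linarith
end
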